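/- Every d-regular connected finite simple graph (with d ≥ 1 and at least 2 vertices) has a spanning tree T containing a vertex v (called the root) such that at least d − 1 of the neighbours of v in T are leaves of T. -/

import Mathlib

namespace Stmt2Aux

open SimpleGraph

variable {V : Type*}

/-- Deleting a non-bridge edge preserves preconnectedness. -/
lemma preconnected_sdiff {G : SimpleGraph V} {a b : V}
    (hG : G.Preconnected)
    (hre : (G \ SimpleGraph.fromEdgeSet {s(a, b)}).Reachable a b) :
    (G \ SimpleGraph.fromEdgeSet {s(a, b)}).Preconnected := by
  intro x y
  obtain ⟨p⟩ := hG x y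
  induction p with
  | nil => exact SimpleGraph.Reachable.refl _
  | cons h q ih =>
    refine SimpleGraph.Reachable.trans ?_ ih
    rename_i x' w y'
    by_cases he : s(x', w) = s(a, b)
    · rw [Sym2.eq_iff] at he
      rcases he with ⟨rfl, rfl⟩ | ⟨rfl, rfl⟩
      · exact hre
      · exact hre.symm
    · refine SimpleGraph.Adj.reachable ?_
      rw [SimpleGraph.sdiff_adj]
      refine ⟨h, ?_⟩
      rw [SimpleGraph.fromEdgeSet_adj]
      rintro ⟨hmem, -⟩
      exact he (by simpa using hmem)

/-- Every connected graph on a finite vertex type has a spanning tree. -/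
lemma exists_tree [Fintype V] :
    ∀ (n : ℕ) (G : SimpleGraph V), G.edgeSet.ncard ≤ n → G.Connected →
      ∃ T, T ≤ G ∧ T.Connected ∧ T.IsAcyclic := by
  have key : ∀ (G : SimpleGraph V), ¬ G.IsAcyclic → G.Connected →
      ∃ G' : SimpleGraph V, G' ≤ G ∧ G'.Connected ∧ G'.edgeSet.ncard < G.edgeSet.ncard := by
    intro G hac hG
    rw [SimpleGraph.IsAcyclic] at hac
    push_neg at hac
    obtain ⟨v, c, hc⟩ := hac
    cases c with
    | nil => exact absurd hc SimpleGraph.Walk.IsCycle.not_of_nil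
    | cons h q =>
      rename_i w
      have hmem : s(v, w) ∈ (SimpleGraph.Walk.cons h q).edges := by
        simp [SimpleGraph.Walk.edges_cons]
      obtain ⟨hadj, hre⟩ :=
        (SimpleGraph.adj_and_reachable_delete_edges_iff_exists_cycle).2
          ⟨v, SimpleGraph.Walk.cons h q, hc, hmem⟩
      set G' := G \ SimpleGraph.fromEdgeSet {s(v, w)} with hG'
      have hle : G' ≤ G := sdiff_le
      have hconn' : G'.Connected := by
        haveI : Nonempty V := hG.nonempty
        exact ⟨preconnected_sdiff hG.preconnected hre⟩
      have hnm : s(v, w) ∉ G'.edgeSet := by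
        rw [SimpleGraph.mem_edgeSet, hG', SimpleGraph.sdiff_adj]
        rintro ⟨-, hbad⟩
        exact hbad (by rw [SimpleGraph.fromEdgeSet_adj]; exact ⟨rfl, hadj.ne⟩)
      have hssub : G'.edgeSet ⊂ G.edgeSet := by
        refine ⟨SimpleGraph.edgeSet_mono hle, fun hsup => hnm (hsup hadj)⟩
      exact ⟨G', hle, hconn', Set.ncard_lt_ncard hssub (Set.toFinite _)⟩
  intro n
  induction n with
  | zero =>
    intro G hn hG
    by_cases hac : G.IsAcyclic
    · exact ⟨G, le_rfl, hG, hac⟩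
    · obtain ⟨G', -, -, hlt⟩ := key G hac hG
      omega
  | succ n ih =>
    intro G hn hG
    by_cases hac : G.IsAcyclic
    · exact ⟨G, le_rfl, hG, hac⟩
    · obtain ⟨G', hle, hconn', hlt⟩ := key G hac hG
      obtain ⟨T, h1, h2, h3⟩ := ih G' (by omega) hconn'
      exact ⟨T, h1.trans hle, h2, h3⟩

/-- The closed neighbourhood of `v` minus `u`. -/
def cutN (G : SimpleGraph V) (v u : V) : Set V := (G.neighborSet v ∪ {v}) \ {u}

lemma mem_cutN {G : SimpleGraph V} {v u x : V} :
    x ∈ cutN G v u ↔ (G.Adj v x ∨ x = v) ∧ x ≠ u := by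
  simp only [cutN, Set.mem_diff, Set.mem_union, Set.mem_singleton_iff,
    SimpleGraph.mem_neighborSet]

lemma not_mem_cutN_self {G : SimpleGraph V} {v u : V} : u ∉ cutN G v u := by
  simp [cutN]

/-- `G` with the vertices of `cutN G v u` isolated. -/
def pruned (G : SimpleGraph V) (v u : V) : SimpleGraph V where
  Adj a b := G.Adj a b ∧ a ∉ cutN G v u ∧ b ∉ cutN G v u
  symm := ⟨fun a b ⟨h, ha, hb⟩ => ⟨h.symm, hb, ha⟩⟩
  loopless := ⟨fun a h => G.irrefl h.1⟩

/-- The component of `u` after deleting `cutN G v u`. -/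
def comp (G : SimpleGraph V) (v u : V) : Set V := {x | (pruned G v u).Reachable u x}

lemma not_mem_cutN_of_walk {G : SimpleGraph V} {v u : V} :
    ∀ {a x : V}, (pruned G v u).Walk a x → a ∉ cutN G v u → x ∉ cutN G v u := by
  intro a x p
  induction p with
  | nil => exact id
  | cons h q ih => exact fun _ => ih h.2.2

lemma mem_comp_not_cutN {G : SimpleGraph V} {v u x : V} (hx : x ∈ comp G v u) :
    x ∉ cutN G v u := by
  obtain ⟨p⟩ := hx
  exact not_mem_cutN_of_walk p not_mem_cutN_self

lemma reach_transfer {H1 H2 : SimpleGraph V} {u w : V}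
    (h : ∀ a b, H1.Adj a b → H1.Reachable u a → H2.Adj a b)
    (hwu : H2.Reachable w u) : ∀ {x}, H1.Reachable u x → H2.Reachable w x := by
  have main : ∀ {a x : V}, H1.Walk a x → H1.Reachable u a → H2.Reachable w a →
      H2.Reachable w x := by
    intro a x p
    induction p with
    | nil => exact fun _ h2 => h2
    | cons hadj q ih =>
      intro h1 h2
      exact ih (h1.trans hadj.reachable) (h2.trans (h _ _ hadj h1).reachable)
  intro x hx
  obtain ⟨p⟩ := hx
  exact main p (SimpleGraph.Reachable.refl u) hwu

/-- The key extremal lemma: a pair `(v, u)` such that deleting `cutN G v u`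
leaves everything else in the component of `u`. -/
lemma exists_good_pair [Fintype V] {G : SimpleGraph V} (hconn : G.Connected)
    (hedge : ∃ p : V × V, G.Adj p.1 p.2) :
    ∃ v u : V, G.Adj v u ∧ ∀ x, x ∉ cutN G v u → x ∈ comp G v u := by
  classical
  obtain ⟨p0, hp0⟩ := hedge
  obtain ⟨p, hpS, hmax⟩ := Set.exists_max_image {p : V × V | G.Adj p.1 p.2}
    (fun p => (comp G p.1 p.2).ncard) (Set.toFinite _) ⟨p0, hp0⟩
  obtain ⟨v, u⟩ := p
  have hvu : G.Adj v u := hpS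
  refine ⟨v, u, hvu, ?_⟩
  by_contra hbad
  push_neg at hbad
  obtain ⟨x, hxD, hxK⟩ := hbad
  set Hp := pruned G v u with hHp
  have hCD : ∀ {y}, Hp.Reachable x y → y ∉ cutN G v u := by
    intro y hy
    obtain ⟨q⟩ := hy
    exact not_mem_cutN_of_walk q hxD
  have huC : ¬ Hp.Reachable x u := fun h => hxK h.symm
  obtain ⟨q⟩ := hconn x u
  obtain ⟨dart, -, hcC, hwC⟩ :=
    q.exists_boundary_dart {y | Hp.Reachable x y} (SimpleGraph.Reachable.refl x) huC
  set c := dart.fst with hcdef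
  set w := dart.snd with hwdef
  have hcw : G.Adj c w := dart.adj
  have hcCm : Hp.Reachable x c := hcC
  have hcD : c ∉ cutN G v u := hCD hcCm
  have hcu : c ≠ u := fun h => huC (h ▸ hcCm)
  have hwD : w ∈ cutN G v u := by
    by_contra hwD
    exact hwC (hcCm.trans (SimpleGraph.Adj.reachable ⟨hcw, hcD, hwD⟩))
  have hcNv : ¬ G.Adj v c := by
    intro h
    rw [mem_cutN] at hcD
    push_neg at hcD
    exact hcu (hcD (Or.inl h))
  have hcv : c ≠ v := fun h =>
    hcD (by rw [h]; exact mem_cutN.2 ⟨Or.inr rfl, hvu.ne⟩)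
  have hwNv : G.Adj v w ∧ w ≠ u := by
    rw [mem_cutN] at hwD
    rcases hwD with ⟨h1 | h1, h2⟩
    · exact ⟨h1, h2⟩
    · exfalso
      rw [mem_cutN] at hcD
      push_neg at hcD
      exact hcu (hcD (Or.inl (h1 ▸ hcw).symm))
  -- facts about the new cut set `cutN G c w`
  have hvD' : v ∉ cutN G c w := by
    rw [mem_cutN]
    rintro ⟨h1 | h1, -⟩
    · exact hcNv h1.symm
    · exact hcv h1.symm
  have huD' : u ∉ cutN G c w := by
    rw [mem_cutN]
    rintro ⟨h1 | h1, -⟩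
    · exact huC (hcCm.trans (SimpleGraph.Adj.reachable ⟨h1, hcD, not_mem_cutN_self⟩))
    · exact hcu h1.symm
  have hKC : ∀ {z}, z ∈ comp G v u → ¬ Hp.Reachable x z := fun hz hxz => hxK (hz.trans hxz.symm)
  have hbase : (pruned G c w).Reachable w u := by
    have h1 : (pruned G c w).Adj w v := ⟨hwNv.1.symm, not_mem_cutN_self, hvD'⟩
    have h2 : (pruned G c w).Adj v u := ⟨hvu, hvD', huD'⟩
    exact h1.reachable.trans h2.reachable
  have key : ∀ {t}, t ∈ comp G v u → t ∉ cutN G c w := by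
    intro t ht
    rw [mem_cutN]
    rintro ⟨h1 | h1, -⟩
    · exact hKC ht (hcCm.trans (SimpleGraph.Adj.reachable ⟨h1, hcD, mem_comp_not_cutN ht⟩))
    · exact hKC ht (h1 ▸ hcCm)
  have hsub : ∀ {z}, z ∈ comp G v u → z ∈ comp G c w := by
    intro z hz
    refine reach_transfer (H1 := Hp) (H2 := pruned G c w) ?_ hbase hz
    intro a b hab hua
    have haK : a ∈ comp G v u := hua
    have hbK : b ∈ comp G v u := hua.trans hab.reachable
    exact ⟨hab.1, key haK, key hbK⟩
  have hvK' : v ∈ comp G c w :=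
    SimpleGraph.Adj.reachable (⟨hwNv.1.symm, not_mem_cutN_self, hvD'⟩ :
      (pruned G c w).Adj w v)
  have hvK : v ∉ comp G v u := fun h =>
    mem_comp_not_cutN h (mem_cutN.2 ⟨Or.inr rfl, hvu.ne⟩)
  have hss : comp G v u ⊂ comp G c w :=
    ⟨fun z hz => hsub hz, fun hsup => hvK (hsup hvK')⟩
  have hlt := Set.ncard_lt_ncard hss (Set.toFinite _)
  have hle := hmax (c, w) hcw
  simp only at hle
  omega

/-- The hub graph: `pruned G v u` together with the full star at `v`. -/
def hub (G : SimpleGraph V) (v u : V) : SimpleGraph V where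
  Adj a b := (pruned G v u).Adj a b ∨ (a = v ∧ G.Adj v b) ∨ (b = v ∧ G.Adj v a)
  symm := by
    constructor
    rintro a b (h | ⟨rfl, h⟩ | ⟨rfl, h⟩)
    · exact Or.inl (h.symm)
    · exact Or.inr (Or.inr ⟨rfl, h⟩)
    · exact Or.inr (Or.inl ⟨rfl, h⟩)
  loopless := by
    constructor
    rintro a (h | ⟨rfl, h⟩ | ⟨rfl, h⟩)
    · exact (pruned G v u).irrefl h
    · exact G.irrefl h
    · exact G.irrefl h

lemma hub_le {G : SimpleGraph V} {v u : V} : hub G v u ≤ G := by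
  rintro a b (h | ⟨rfl, h⟩ | ⟨rfl, h⟩)
  · exact h.1
  · exact h
  · exact h.symm

lemma pruned_le_hub {G : SimpleGraph V} {v u : V} : pruned G v u ≤ hub G v u :=
  fun _ _ h => Or.inl h

end Stmt2Aux

/-- Every `d`-regular connected graph (with `d ≥ 1` and at least two vertices) has a
spanning tree containing a vertex at least `d - 1` of whose tree-neighbours are leaves
of the tree. -/
theorem stmt2 {V : Type*} [Fintype V] (G : SimpleGraph V) (d : ℕ) (hd : 1 ≤ d)
    (hcard : 2 ≤ Fintype.card V)
    (hreg : ∀ v : V, (G.neighborSet v).ncard = d) (hconn : G.Connected) :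
    ∃ T : SimpleGraph V, T ≤ G ∧ T.Connected ∧ T.IsAcyclic ∧
      ∃ v : V, d - 1 ≤ {u | T.Adj v u ∧ (T.neighborSet u).ncard = 1}.ncard := by
  classical
  open Stmt2Aux in
  have hnt : Nontrivial V := Fintype.one_lt_card_iff_nontrivial.mp (by omega)
  obtain ⟨a, b, hab⟩ := exists_pair_ne V
  have hedge : ∃ p : V × V, G.Adj p.1 p.2 := by
    obtain ⟨q⟩ := hconn a b
    cases q with
    | nil => exact absurd rfl hab
    | cons h _ => exact ⟨(a, _), h⟩
  obtain ⟨v, u, hvu, hfull⟩ := Stmt2Aux.exists_good_pair hconn hedge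
  have hG2le : Stmt2Aux.hub G v u ≤ G := Stmt2Aux.hub_le
  have hG2conn : (Stmt2Aux.hub G v u).Connected := by
    have hreachv : ∀ x, (Stmt2Aux.hub G v u).Reachable v x := by
      intro x
      by_cases hx : x ∈ Stmt2Aux.cutN G v u
      · rw [Stmt2Aux.mem_cutN] at hx
        rcases hx.1 with h | rfl
        · exact SimpleGraph.Adj.reachable (Or.inr (Or.inl ⟨rfl, h⟩))
        · exact SimpleGraph.Reachable.refl _
      · have hx' := hfull x hx
        have h2 : (Stmt2Aux.hub G v u).Reachable u x := hx'.mono Stmt2Aux.pruned_le_hub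
        exact (SimpleGraph.Adj.reachable
          (show (Stmt2Aux.hub G v u).Adj v u from Or.inr (Or.inl ⟨rfl, hvu⟩))).trans h2
    haveI : Nonempty V := ⟨a⟩
    exact ⟨fun x y => (hreachv x).symm.trans (hreachv y)⟩
  obtain ⟨T, hTle, hTconn, hTac⟩ :=
    Stmt2Aux.exists_tree ((Stmt2Aux.hub G v u).edgeSet.ncard) _ le_rfl hG2conn
  refine ⟨T, hTle.trans hG2le, hTconn, hTac, v, ?_⟩
  have hsub : G.neighborSet v \ {u} ⊆ {y | T.Adj v y ∧ (T.neighborSet y).ncard = 1} := by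
    intro x hx
    obtain ⟨hxN, hxu⟩ := hx
    have hxN' : G.Adj v x := hxN
    have hxu' : x ≠ u := hxu
    have hxD : x ∈ Stmt2Aux.cutN G v u := Stmt2Aux.mem_cutN.2 ⟨Or.inl hxN', hxu'⟩
    have hxv : x ≠ v := fun h => G.irrefl (h ▸ hxN')
    have honly : ∀ y, T.Adj x y → y = v := by
      intro y hy
      rcases hTle hy with h | ⟨h1, h⟩ | ⟨h1, h⟩
      · exact absurd hxD h.2.1
      · exact absurd h1 hxv
      · exact h1
    obtain ⟨z, hz⟩ := exists_ne x
    obtain ⟨q⟩ := hTconn.preconnected x z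
    have hxadj : T.Adj x v := by
      cases q with
      | nil => exact absurd rfl hz.symm
      | cons h _ => exact (honly _ h) ▸ h
    have hnbr : T.neighborSet x = {v} :=
      Set.eq_singleton_iff_unique_mem.2 ⟨hxadj, fun y hy => honly y hy⟩
    exact ⟨hxadj.symm, by rw [hnbr, Set.ncard_singleton]⟩
  have h1 : (G.neighborSet v \ {u}).ncard = d - 1 := by
    rw [Set.ncard_diff_singleton_of_mem (show u ∈ G.neighborSet v from hvu),
      hreg v]
  calc d - 1 = (G.neighborSet v \ {u}).ncard := h1.symm
    _ ≤ _ := Set.ncard_le_ncard hsub (Set.toFinite _)
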